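/- Let μ₁, μ₂, b, a be positive reals with a > μ₁·μ₂ + b. Then there exists ε₀ > 0 such that for every ε ∈ (0, ε₀) the equation (ε·λ + μ₁)(ε·λ + μ₂) + b + a·e^{−λ} = 0 has a complex solution λ = μ + iν with μ > 0 and 0 < ν < π. Moreover these solutions can be chosen so that μ → ln(a/(μ₁·μ₂ + b)) and ν → π as ε → 0⁺. -/

import Mathlib

open Filter Set
open scoped NNReal

set_option maxHeartbeats 1000000 in
private lemma exists_char_root (μ1 μ2 b a : ℝ) (hμ1 : 0 < μ1) (hμ2 : 0 < μ2)
    (hb : 0 < b) (ha : 0 < a) (hgt : μ1 * μ2 + b < a) :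
    ∃ ε0 > (0:ℝ), ∃ K : ℝ, 0 ≤ K ∧ ∀ ε : ℝ, 0 < ε → ε < ε0 → ∃ lam : ℂ,
      (((ε : ℂ) * lam + (μ1 : ℂ)) * ((ε : ℂ) * lam + (μ2 : ℂ)) + (b : ℂ)
        + (a : ℂ) * Complex.exp (-lam) = 0) ∧
      0 < lam.re ∧ 0 < lam.im ∧ lam.im < Real.pi ∧
      ‖lam - ((Real.log (a / (μ1 * μ2 + b)) : ℂ) + (Real.pi : ℂ) * Complex.I)‖ ≤ K * ε := by
  have hq : 0 < μ1 * μ2 + b := by positivity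
  set q : ℝ := μ1 * μ2 + b with hqdef
  set α : ℝ := Real.log (a / q) with hαdef
  have hα : 0 < α := Real.log_pos (by rw [lt_div_iff₀ hq]; linarith)
  set lz : ℂ := (α : ℂ) + (Real.pi : ℂ) * Complex.I with hlzdef
  have hlzre : lz.re = α := by simp [hlzdef]
  have hlzim : lz.im = Real.pi := by simp [hlzdef]
  set r : ℝ := min (α / 2) 1 with hrdef
  have hr0 : 0 < r := lt_min (by positivity) one_pos
  have hrα : r ≤ α / 2 := min_le_left _ _
  have hr1 : r ≤ 1 := min_le_right _ _
  set M : ℝ := ‖lz‖ + 1 with hMdef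
  have hM0 : 0 < M := by positivity
  have hnormM : ∀ z ∈ Metric.closedBall lz r, ‖z‖ ≤ M := by
    intro z hz
    rw [Metric.mem_closedBall, dist_eq_norm] at hz
    calc ‖z‖ = ‖lz + (z - lz)‖ := by ring_nf
    _ ≤ ‖lz‖ + ‖z - lz‖ := norm_add_le _ _
    _ ≤ ‖lz‖ + 1 := by linarith
  set C : ℝ := M ^ 2 + M * (μ1 + μ2) with hCdef
  have hC : 0 < C := by positivity
  set L : ℝ := 2 / q * (2 * M + μ1 + μ2) with hLdef
  have hL : 0 < L := by positivity
  refine ⟨min (min 1 (q / (2 * C))) (min (r * q / (2 * C)) (1 / (2 * L))), by positivity,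
    4 * C / q, by positivity, ?_⟩
  intro ε hε hεlt
  have hε1 : ε ≤ 1 := le_of_lt (lt_of_lt_of_le hεlt ((min_le_left _ _).trans (min_le_left _ _)))
  have hεq : ε * C ≤ q / 2 := by
    have : ε ≤ q / (2 * C) := le_of_lt (lt_of_lt_of_le hεlt
      ((min_le_left _ _).trans (min_le_right _ _)))
    rw [le_div_iff₀ (by positivity)] at this
    nlinarith
  have hεr : ε * C ≤ r * q / 2 := by
    have : ε ≤ r * q / (2 * C) := le_of_lt (lt_of_lt_of_le hεlt
      ((min_le_right _ _).trans (min_le_left _ _)))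
    rw [le_div_iff₀ (by positivity)] at this
    nlinarith
  have hεL : ε * L ≤ 1 / 2 := by
    have : ε ≤ 1 / (2 * L) := le_of_lt (lt_of_lt_of_le hεlt
      ((min_le_right _ _).trans (min_le_right _ _)))
    rw [le_div_iff₀ (by positivity)] at this
    nlinarith
  set Q : ℂ → ℂ := fun z => ((ε : ℂ) * z + (μ1 : ℂ)) * ((ε : ℂ) * z + (μ2 : ℂ)) + (b : ℂ)
    with hQdef
  set F : ℂ → ℂ := fun z => (Real.log a : ℂ) - Complex.log (Q z) + (Real.pi : ℂ) * Complex.I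
    with hFdef
  set B : Set ℂ := Metric.closedBall lz r with hBdef
  set D : Set ℂ := Metric.closedBall ((q : ℝ) : ℂ) (q / 2) with hDdef
  -- basic facts about members of D
  have hDre : ∀ z ∈ D, q / 2 ≤ z.re := by
    intro z hz
    rw [hDdef, Metric.mem_closedBall, dist_eq_norm] at hz
    have h1 : |(z - (q : ℂ)).re| ≤ ‖z - (q : ℂ)‖ := Complex.abs_re_le_norm _
    rw [Complex.sub_re, Complex.ofReal_re] at h1
    have := abs_le.mp (h1.trans hz)
    linarith [this.1]
  have hDnorm : ∀ z ∈ D, q / 2 ≤ ‖z‖ := by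
    intro z hz
    have := hDre z hz
    have h2 : |z.re| ≤ ‖z‖ := Complex.abs_re_le_norm z
    have : z.re ≤ |z.re| := le_abs_self _
    linarith [hDre z hz]
  have hDslit : ∀ z ∈ D, z ∈ Complex.slitPlane := by
    intro z hz
    rw [Complex.mem_slitPlane_iff]
    left; linarith [hDre z hz]
  have hDne : ∀ z ∈ D, z ≠ 0 := by
    intro z hz h0
    have := hDre z hz
    rw [h0] at this
    simp at this
    linarith
  -- log is Lipschitz on D
  have hlogLip : ∀ z ∈ D, ∀ w ∈ D,
      ‖Complex.log z - Complex.log w‖ ≤ 2 / q * ‖z - w‖ := by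
    intro z hz w hw
    exact (convex_closedBall _ _).norm_image_sub_le_of_norm_hasDerivWithin_le
      (f := Complex.log) (f' := fun u => u⁻¹)
      (fun u hu => (Complex.hasDerivAt_log (hDslit u hu)).hasDerivWithinAt)
      (fun u hu => by
        rw [norm_inv]
        rw [inv_le_comm₀ (lt_of_lt_of_le (by positivity) (hDnorm u hu)) (by positivity)]
        calc (2 / q)⁻¹ = q / 2 := by field_simp
        _ ≤ ‖u‖ := hDnorm u hu) hw hz
  -- Q maps B into D with quantitative bound
  have hQnear : ∀ z ∈ B, ‖Q z - (q : ℂ)‖ ≤ ε * C := by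
    intro z hz
    have hdiff : Q z - (q : ℂ) = (ε : ℂ) * z * ((ε : ℂ) * z + ((μ1 : ℂ) + (μ2 : ℂ))) := by
      rw [hQdef, hqdef]; push_cast; ring
    rw [hdiff]
    have hz' : ‖z‖ ≤ M := hnormM z hz
    have h1 : ‖(ε : ℂ) * z‖ = ε * ‖z‖ := by
      rw [norm_mul, Complex.norm_real, Real.norm_eq_abs, abs_of_pos hε]
    have h2 : ‖(ε : ℂ) * z + ((μ1 : ℂ) + (μ2 : ℂ))‖ ≤ M + (μ1 + μ2) := by
      calc ‖(ε : ℂ) * z + ((μ1 : ℂ) + (μ2 : ℂ))‖ ≤ ‖(ε : ℂ) * z‖ + ‖((μ1 : ℂ) + (μ2 : ℂ))‖ :=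
        norm_add_le _ _
      _ ≤ M + (μ1 + μ2) := by
        rw [h1]
        have : ‖((μ1 : ℂ) + (μ2 : ℂ))‖ = μ1 + μ2 := by
          rw [← Complex.ofReal_add, Complex.norm_real, Real.norm_eq_abs,
            abs_of_pos (by positivity)]
        rw [this]
        have : ε * ‖z‖ ≤ M := by nlinarith [norm_nonneg z]
        linarith
    calc ‖(ε : ℂ) * z * ((ε : ℂ) * z + ((μ1 : ℂ) + (μ2 : ℂ)))‖
        = ε * ‖z‖ * ‖(ε : ℂ) * z + ((μ1 : ℂ) + (μ2 : ℂ))‖ := by rw [norm_mul, h1]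
    _ ≤ ε * M * (M + (μ1 + μ2)) := by
        have h3 : 0 ≤ ε * ‖z‖ := by positivity
        have h4 : ε * ‖z‖ ≤ ε * M := by nlinarith [norm_nonneg z]
        nlinarith [norm_nonneg ((ε : ℂ) * z + ((μ1 : ℂ) + (μ2 : ℂ)))]
    _ = ε * C := by rw [hCdef]; ring
  have hQD : ∀ z ∈ B, Q z ∈ D := by
    intro z hz
    rw [hDdef, Metric.mem_closedBall, dist_eq_norm]
    exact (hQnear z hz).trans hεq
  have hqD : ((q : ℝ) : ℂ) ∈ D := Metric.mem_closedBall_self (by positivity)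
  -- key identity: F z - lz = log q - log (Q z)
  have hlogdiv : α = Real.log a - Real.log q := Real.log_div (ne_of_gt ha) (ne_of_gt hq)
  have hFsub : ∀ z : ℂ, F z - lz = Complex.log ((q : ℝ) : ℂ) - Complex.log (Q z) := by
    intro z
    rw [hFdef, hlzdef, ← Complex.ofReal_log hq.le]
    simp only []
    rw [hlogdiv]
    push_cast
    ring
  -- F maps B into B
  have hFball : ∀ z ∈ B, ‖F z - lz‖ ≤ 2 / q * (ε * C) := by
    intro z hz
    rw [hFsub z]
    calc ‖Complex.log ((q : ℝ) : ℂ) - Complex.log (Q z)‖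
        ≤ 2 / q * ‖((q : ℝ) : ℂ) - Q z‖ := hlogLip _ hqD _ (hQD z hz)
    _ ≤ 2 / q * (ε * C) := by
        have := hQnear z hz
        rw [← norm_neg]
        simp only [neg_sub]
        exact mul_le_mul_of_nonneg_left (hQnear z hz) (by positivity)
  have hmaps : MapsTo F B B := by
    intro z hz
    rw [hBdef, Metric.mem_closedBall, dist_eq_norm]
    calc ‖F z - lz‖ ≤ 2 / q * (ε * C) := hFball z hz
    _ ≤ 2 / q * (r * q / 2) := mul_le_mul_of_nonneg_left hεr (by positivity)
    _ = r := by field_simp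
  -- F is a contraction on B
  have hFlip : ∀ z ∈ B, ∀ w ∈ B, ‖F z - F w‖ ≤ 1 / 2 * ‖z - w‖ := by
    intro z hz w hw
    have h1 : F z - F w = Complex.log (Q w) - Complex.log (Q z) := by
      rw [hFdef]; ring
    have h2 : Q w - Q z = (ε : ℂ) * (w - z) * ((ε : ℂ) * (w + z) + ((μ1 : ℂ) + (μ2 : ℂ))) := by
      rw [hQdef]; push_cast; ring
    have h3 : ‖Q w - Q z‖ ≤ ε * (2 * M + μ1 + μ2) * ‖z - w‖ := by
      rw [h2, norm_mul, norm_mul, Complex.norm_real, Real.norm_eq_abs, abs_of_pos hε]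
      have hwz : ‖w - z‖ = ‖z - w‖ := by rw [← norm_neg]; ring_nf
      rw [hwz]
      have h4 : ‖(ε : ℂ) * (w + z) + ((μ1 : ℂ) + (μ2 : ℂ))‖ ≤ 2 * M + μ1 + μ2 := by
        calc ‖(ε : ℂ) * (w + z) + ((μ1 : ℂ) + (μ2 : ℂ))‖
            ≤ ‖(ε : ℂ) * (w + z)‖ + ‖((μ1 : ℂ) + (μ2 : ℂ))‖ := norm_add_le _ _
        _ ≤ 2 * M + (μ1 + μ2) := by
            have h5 : ‖(ε : ℂ) * (w + z)‖ = ε * ‖w + z‖ := by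
              rw [norm_mul, Complex.norm_real, Real.norm_eq_abs, abs_of_pos hε]
            have h6 : ‖w + z‖ ≤ 2 * M := by
              calc ‖w + z‖ ≤ ‖w‖ + ‖z‖ := norm_add_le _ _
              _ ≤ 2 * M := by linarith [hnormM w hw, hnormM z hz]
            have h7 : ‖((μ1 : ℂ) + (μ2 : ℂ))‖ = μ1 + μ2 := by
              rw [← Complex.ofReal_add, Complex.norm_real, Real.norm_eq_abs,
                abs_of_pos (by positivity)]
            rw [h5, h7]
            nlinarith [norm_nonneg (w + z)]
        _ = 2 * M + μ1 + μ2 := by ring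
      nlinarith [h4, norm_nonneg (z - w), mul_nonneg hε.le (norm_nonneg (z - w)),
        norm_nonneg ((ε : ℂ) * (w + z) + ((μ1 : ℂ) + (μ2 : ℂ)))]
    calc ‖F z - F w‖ = ‖Complex.log (Q w) - Complex.log (Q z)‖ := by rw [h1]
    _ ≤ 2 / q * ‖Q w - Q z‖ := hlogLip _ (hQD w hw) _ (hQD z hz)
    _ ≤ 2 / q * (ε * (2 * M + μ1 + μ2) * ‖z - w‖) :=
        mul_le_mul_of_nonneg_left h3 (by positivity)
    _ = ε * L * ‖z - w‖ := by rw [hLdef]; ring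
    _ ≤ 1 / 2 * ‖z - w‖ := mul_le_mul_of_nonneg_right hεL (norm_nonneg _)
  have hlipOn : LipschitzOnWith (1 / 2 : ℝ≥0) F B := by
    apply LipschitzOnWith.of_dist_le_mul
    intro x hx y hy
    rw [dist_eq_norm, dist_eq_norm]
    have := hFlip x hx y hy
    calc ‖F x - F y‖ ≤ 1 / 2 * ‖x - y‖ := this
    _ = ((1 / 2 : ℝ≥0) : ℝ) * ‖x - y‖ := by norm_num
  have hcontr : ContractingWith (1 / 2 : ℝ≥0) (hmaps.restrict F B B) :=
    ⟨by rw [← NNReal.coe_lt_coe]; push_cast; norm_num, hlipOn.mapsToRestrict hmaps⟩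
  have hlzB : lz ∈ B := Metric.mem_closedBall_self hr0.le
  obtain ⟨lam, hlamB, hfix, -, -⟩ := hcontr.exists_fixedPoint'
    (Metric.isClosed_closedBall.isComplete) hmaps hlzB (edist_ne_top _ _)
  -- facts about lam
  have hlamdist : ‖lam - lz‖ ≤ r := by
    rw [hBdef, Metric.mem_closedBall, dist_eq_norm] at hlamB
    exact hlamB
  have hlamre : α / 2 ≤ lam.re := by
    have h1 : |(lam - lz).re| ≤ ‖lam - lz‖ := Complex.abs_re_le_norm _
    rw [Complex.sub_re, hlzre] at h1
    have := abs_le.mp (h1.trans hlamdist)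
    linarith [this.1]
  have hlamim : Real.pi - 1 ≤ lam.im := by
    have h1 : |(lam - lz).im| ≤ ‖lam - lz‖ := Complex.abs_im_le_norm _
    rw [Complex.sub_im, hlzim] at h1
    have := abs_le.mp (h1.trans hlamdist)
    linarith [this.1]
  have hlamre0 : 0 < lam.re := lt_of_lt_of_le (by positivity) hlamre
  have hlamim0 : 0 < lam.im := lt_of_lt_of_le (by linarith [Real.pi_gt_three]) hlamim
  have hQlamD : Q lam ∈ D := hQD lam hlamB
  have hQlamne : Q lam ≠ 0 := hDne _ hQlamD
  have hfix' : F lam = lam := hfix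
  -- the equation
  have hexp : Complex.exp (-lam) = Q lam * (a : ℂ)⁻¹ * (-1) := by
    have h1 : -lam = Complex.log (Q lam) + (-(Real.log a : ℂ) + -((Real.pi : ℂ) * Complex.I)) := by
      conv_lhs => rw [← hfix']
      simp only [hFdef]; ring
    rw [h1, Complex.exp_add, Complex.exp_add, Complex.exp_log hQlamne,
      Complex.exp_neg, Complex.exp_neg, Complex.exp_pi_mul_I]
    have h2 : Complex.exp ((Real.log a : ℂ)) = (a : ℂ) := by
      rw [← Complex.ofReal_exp, Real.exp_log ha]
    rw [h2]
    ring
  have heq : ((ε : ℂ) * lam + (μ1 : ℂ)) * ((ε : ℂ) * lam + (μ2 : ℂ)) + (b : ℂ)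
      + (a : ℂ) * Complex.exp (-lam) = 0 := by
    rw [hexp]
    have hane : (a : ℂ) ≠ 0 := Complex.ofReal_ne_zero.mpr (ne_of_gt ha)
    have : (a : ℂ) * (Q lam * (a : ℂ)⁻¹ * (-1)) = -Q lam := by
      field_simp
    rw [this, hQdef]
    ring
  -- imaginary part bounds
  have hQim : (Q lam).im = ε * lam.im * (2 * ε * lam.re + μ1 + μ2) := by
    rw [hQdef]
    simp [Complex.add_im, Complex.add_re, Complex.mul_im, Complex.mul_re,
      Complex.ofReal_re, Complex.ofReal_im]
    ring
  have hQimpos : 0 < (Q lam).im := by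
    rw [hQim]
    have : 0 < 2 * ε * lam.re + μ1 + μ2 := by positivity
    positivity
  have hQrepos : 0 < (Q lam).re := lt_of_lt_of_le (by positivity) (hDre _ hQlamD)
  have hargpos : 0 < Complex.arg (Q lam) := by
    rcases lt_or_eq_of_le (Complex.arg_nonneg_iff.mpr hQimpos.le) with h | h
    · exact h
    · exfalso
      have := Complex.arg_eq_zero_iff.mp h.symm
      linarith [this.2, hQimpos]
  have harglt : Complex.arg (Q lam) < Real.pi / 2 :=
    Complex.arg_lt_pi_div_two_iff.mpr (Or.inl hQrepos)
  have himeq : lam.im = Real.pi - Complex.arg (Q lam) := by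
    have h1 := congrArg Complex.im hfix'
    rw [hFdef] at h1
    simp only [Complex.add_im, Complex.sub_im, Complex.ofReal_im, Complex.log_im,
      Complex.mul_im, Complex.ofReal_re, Complex.I_im, Complex.I_re] at h1
    rw [← h1]
    ring
  have himpos : 0 < lam.im := hlamim0
  have himlt : lam.im < Real.pi := by
    rw [himeq]
    linarith
  -- quantitative bound
  have hquant : ‖lam - lz‖ ≤ 4 * C / q * ε := by
    have h1 : lam - lz = (F lam - F lz) + (F lz - lz) := by rw [hfix']; ring
    have h2 : ‖lam - lz‖ ≤ ‖F lam - F lz‖ + ‖F lz - lz‖ := by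
      rw [h1]; exact norm_add_le _ _
    have h3 : ‖F lam - F lz‖ ≤ 1 / 2 * ‖lam - lz‖ := hFlip lam hlamB lz hlzB
    have h4 : ‖F lz - lz‖ ≤ 2 / q * (ε * C) := hFball lz hlzB
    have h5 : 2 / q * (ε * C) = 2 * C / q * ε := by ring
    have h6 : ‖lam - lz‖ ≤ 1 / 2 * ‖lam - lz‖ + 2 * C / q * ε := by
      rw [← h5]; linarith
    have h7 : 4 * C / q * ε = 2 * (2 * C / q * ε) := by ring
    linarith
  exact ⟨lam, heq, hlamre0, himpos, himlt, hquant⟩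

/-- For small ε > 0 the rescaled characteristic equation
(ελ+μ₁)(ελ+μ₂)+b+a·e^{-λ} = 0 has a root λ = μ+iν with μ > 0, 0 < ν < π, and these
roots converge to ln(a/(μ₁μ₂+b)) + iπ as ε → 0⁻. -/
theorem characteristic_root_small_eps
    (μ1 μ2 b a : ℝ) (hμ1 : 0 < μ1) (hμ2 : 0 < μ2) (hb : 0 < b) (ha : 0 < a)
    (hgt : μ1 * μ2 + b < a) :
    ∃ ε0 > (0:ℝ), ∃ μ ν : ℝ → ℝ,
      (∀ ε : ℝ, 0 < ε → ε < ε0 →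
        (((ε : ℂ) * ((μ ε : ℂ) + (ν ε : ℂ) * Complex.I) + (μ1 : ℂ)) *
            ((ε : ℂ) * ((μ ε : ℂ) + (ν ε : ℂ) * Complex.I) + (μ2 : ℂ)) +
          (b : ℂ) + (a : ℂ) * Complex.exp (-((μ ε : ℂ) + (ν ε : ℂ) * Complex.I)) = 0) ∧
        0 < μ ε ∧ 0 < ν ε ∧ ν ε < Real.pi) ∧
      Filter.Tendsto μ (nhdsWithin 0 (Set.Ioi 0)) (nhds (Real.log (a / (μ1 * μ2 + b)))) ∧
      Filter.Tendsto ν (nhdsWithin 0 (Set.Ioi 0)) (nhds Real.pi) := by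
  classical
  obtain ⟨ε0, hε0, K, hK, H⟩ := exists_char_root μ1 μ2 b a hμ1 hμ2 hb ha hgt
  set lz : ℂ := (Real.log (a / (μ1 * μ2 + b)) : ℂ) + (Real.pi : ℂ) * Complex.I with hlzdef
  set lamf : ℝ → ℂ := fun ε => if h : 0 < ε ∧ ε < ε0 then (H ε h.1 h.2).choose else lz
    with hlamfdef
  refine ⟨ε0, hε0, fun ε => (lamf ε).re, fun ε => (lamf ε).im, ?_, ?_, ?_⟩
  · intro ε h1 h2
    have hd : lamf ε = (H ε h1 h2).choose := dif_pos ⟨h1, h2⟩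
    obtain ⟨heq, hre, him, himlt, -⟩ := (H ε h1 h2).choose_spec
    simp only [hd]
    rw [Complex.re_add_im]
    exact ⟨heq, hre, him, himlt⟩
  · rw [Metric.tendsto_nhdsWithin_nhds]
    intro δ hδ
    refine ⟨min ε0 (δ / (K + 1)), lt_min hε0 (by positivity), ?_⟩
    intro x hx hdist
    rw [Real.dist_eq, sub_zero, abs_of_pos hx] at hdist
    have h1 : 0 < x := hx
    have h2 : x < ε0 := lt_of_lt_of_le hdist (min_le_left _ _)
    have h3 : x < δ / (K + 1) := lt_of_lt_of_le hdist (min_le_right _ _)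
    have hd : lamf x = (H x h1 h2).choose := dif_pos ⟨h1, h2⟩
    obtain ⟨-, -, -, -, hbound⟩ := (H x h1 h2).choose_spec
    rw [Real.dist_eq, hd]
    have h4 : |((H x h1 h2).choose).re - Real.log (a / (μ1 * μ2 + b))| ≤ K * x := by
      have h5 : |((H x h1 h2).choose - lz).re| ≤ ‖(H x h1 h2).choose - lz‖ :=
        Complex.abs_re_le_norm _
      have h6 : ((H x h1 h2).choose - lz).re = ((H x h1 h2).choose).re
          - Real.log (a / (μ1 * μ2 + b)) := by
        simp [hlzdef]
      rw [h6] at h5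
      exact h5.trans hbound
    have h7 : K * x < δ := by
      have : K * x ≤ K * (δ / (K + 1)) := by nlinarith
      have h8 : K * (δ / (K + 1)) < δ := by
        rw [mul_div_assoc'] at *
        rw [div_lt_iff₀ (by positivity)]
        nlinarith
      linarith
    exact lt_of_le_of_lt h4 h7
  · rw [Metric.tendsto_nhdsWithin_nhds]
    intro δ hδ
    refine ⟨min ε0 (δ / (K + 1)), lt_min hε0 (by positivity), ?_⟩
    intro x hx hdist
    rw [Real.dist_eq, sub_zero, abs_of_pos hx] at hdist
    have h1 : 0 < x := hx
    have h2 : x < ε0 := lt_of_lt_of_le hdist (min_le_left _ _)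
    have h3 : x < δ / (K + 1) := lt_of_lt_of_le hdist (min_le_right _ _)
    have hd : lamf x = (H x h1 h2).choose := dif_pos ⟨h1, h2⟩
    obtain ⟨-, -, -, -, hbound⟩ := (H x h1 h2).choose_spec
    rw [Real.dist_eq, hd]
    have h4 : |((H x h1 h2).choose).im - Real.pi| ≤ K * x := by
      have h5 : |((H x h1 h2).choose - lz).im| ≤ ‖(H x h1 h2).choose - lz‖ :=
        Complex.abs_im_le_norm _
      have h6 : ((H x h1 h2).choose - lz).im = ((H x h1 h2).choose).im - Real.pi := by
        simp [hlzdef]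
      rw [h6] at h5
      exact h5.trans hbound
    have h7 : K * x < δ := by
      have : K * x ≤ K * (δ / (K + 1)) := by nlinarith
      have h8 : K * (δ / (K + 1)) < δ := by
        rw [mul_div_assoc'] at *
        rw [div_lt_iff₀ (by positivity)]
        nlinarith
      linarith
    exact lt_of_le_of_lt h4 h7
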